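/- There exists a family D of interval partitions such that: (1) |D| ≤ 𝔡; (2) for each I ∈ D and each n, there exists l_n with l_n > 0, l_n ≥ n, and |I_n| = 2^{l_n}; (3) for every interval partition J there exists I ∈ D such that for all but finitely many n there exists k > n with J_k ⊆ I_n. -/

import Mathlib

open Cardinal Filter

/-- An interval partition of `ω`: a strictly increasing sequence starting at `0`;
its `n`-th interval is `[i n, i (n+1))`. -/
def IsIntervalPartition (i : ℕ → ℕ) : Prop := i 0 = 0 ∧ StrictMono i

/-- The dominating number `𝔡`. -/
noncomputable def dominatingNumber : Cardinal :=
  sInf {c | ∃ F : Set (ℕ → ℕ), #↥F = c ∧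
    ∀ g : ℕ → ℕ, ∃ f ∈ F, ∀ᶠ n in atTop, g n ≤ f n}

/-- Auxiliary interval partition built from `f`: each step adds a power of two
large enough to exceed `f` at the current point. -/
noncomputable def ipOf (f : ℕ → ℕ) : ℕ → ℕ
  | 0 => 0
  | n + 1 => ipOf f n + 2 ^ (max (max n 1) (Nat.log 2 (f (ipOf f n)) + 1))

lemma ipOf_strictMono (f : ℕ → ℕ) : StrictMono (ipOf f) := by
  apply strictMono_nat_of_lt_succ
  intro n
  have : 0 < 2 ^ (max (max n 1) (Nat.log 2 (f (ipOf f n)) + 1)) := Nat.pow_pos (by norm_num)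
  simp [ipOf]

lemma ipOf_isIntervalPartition (f : ℕ → ℕ) : IsIntervalPartition (ipOf f) :=
  ⟨rfl, ipOf_strictMono f⟩

lemma ipOf_ge (f : ℕ → ℕ) (n : ℕ) (hn : 1 ≤ n) : n + 1 ≤ ipOf f n := by
  induction n with
  | zero => omega
  | succ m ih =>
    show m + 2 ≤ ipOf f m + 2 ^ (max (max m 1) (Nat.log 2 (f (ipOf f m)) + 1))
    rcases Nat.eq_zero_or_pos m with h0 | h0
    · subst h0
      have : 2 ^ 1 ≤ 2 ^ (max (max 0 1) (Nat.log 2 (f (ipOf f 0)) + 1)) :=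
        Nat.pow_le_pow_right (by norm_num) (by omega)
      show 0 + 1 + 1 ≤ ipOf f 0 + 2 ^ _
      simp only [ipOf] at this ⊢
      omega
    · have h1 := ih h0
      have : 1 ≤ 2 ^ (max (max m 1) (Nat.log 2 (f (ipOf f m)) + 1)) :=
        Nat.one_le_two_pow
      omega

lemma ipOf_step_gt (f : ℕ → ℕ) (n : ℕ) : f (ipOf f n) < ipOf f (n + 1) := by
  have h1 : f (ipOf f n) < 2 ^ (Nat.log 2 (f (ipOf f n)) + 1) :=
    Nat.lt_pow_succ_log_self (by norm_num) _
  have h2 : 2 ^ (Nat.log 2 (f (ipOf f n)) + 1)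
      ≤ 2 ^ (max (max n 1) (Nat.log 2 (f (ipOf f n)) + 1)) :=
    Nat.pow_le_pow_right (by norm_num) (le_max_right _ _)
  show f (ipOf f n) < ipOf f n + 2 ^ (max (max n 1) (Nat.log 2 (f (ipOf f n)) + 1))
  omega

/-- there is a family `D` of interval partitions of size at most `𝔡`,
each of whose intervals has length a power `2^{l_n}` with `0 < l_n` and `l_n ≥ n`,
such that every interval partition `J` has, for all but finitely many `n`, some
interval `J_k` with `k > n` contained in the `n`-th interval of some member of `D`. -/
theorem stmt_2 : ∃ D : Set (ℕ → ℕ),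
    (∀ i ∈ D, IsIntervalPartition i) ∧
    #↥D ≤ dominatingNumber ∧
    (∀ i ∈ D, ∀ n : ℕ, ∃ l : ℕ, 0 < l ∧ n ≤ l ∧ i (n + 1) - i n = 2 ^ l) ∧
    (∀ j : ℕ → ℕ, IsIntervalPartition j → ∃ i ∈ D, ∀ᶠ n in atTop,
      ∃ k > n, Set.Ico (j k) (j (k + 1)) ⊆ Set.Ico (i n) (i (n + 1))) := by
  classical
  -- extract a dominating family of minimal cardinality
  set S : Set Cardinal := {c | ∃ F : Set (ℕ → ℕ), #↥F = c ∧
    ∀ g : ℕ → ℕ, ∃ f ∈ F, ∀ᶠ n in atTop, g n ≤ f n} with hS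
  have hSne : S.Nonempty := by
    refine ⟨#↥(Set.univ : Set (ℕ → ℕ)), Set.univ, rfl, fun g => ⟨g, trivial, ?_⟩⟩
    exact Eventually.of_forall fun n => le_rfl
  have hmem : dominatingNumber ∈ S := csInf_mem hSne
  obtain ⟨F, hFcard, hFdom⟩ := hmem
  refine ⟨(fun f => ipOf f) '' F, ?_, ?_, ?_, ?_⟩
  · rintro i ⟨f, -, rfl⟩
    exact ipOf_isIntervalPartition f
  · calc #↥((fun f => ipOf f) '' F) ≤ #↥F := Cardinal.mk_image_le
      _ = dominatingNumber := hFcard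
  · rintro i ⟨f, -, rfl⟩ n
    refine ⟨max (max n 1) (Nat.log 2 (f (ipOf f n)) + 1), ?_, ?_, ?_⟩
    · have : 1 ≤ max n 1 := le_max_right _ _
      omega
    · have : n ≤ max n 1 := le_max_left _ _
      omega
    · show ipOf f n + 2 ^ (max (max n 1) (Nat.log 2 (f (ipOf f n)) + 1)) - ipOf f n
          = 2 ^ (max (max n 1) (Nat.log 2 (f (ipOf f n)) + 1))
      exact Nat.add_sub_cancel_left _ _
  · rintro j ⟨hj0, hjmono⟩
    have hex : ∀ m : ℕ, ∃ k, m ≤ j k := fun m => ⟨m, hjmono.le_apply⟩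
    set G : ℕ → ℕ := fun m => max (j (Nat.find (hex m) + 1)) (j (m + 1)) with hG
    obtain ⟨f, hfF, hfd⟩ := hFdom G
    rw [eventually_atTop] at hfd
    obtain ⟨N, hN⟩ := hfd
    refine ⟨ipOf f, ⟨f, hfF, rfl⟩, ?_⟩
    rw [eventually_atTop]
    refine ⟨max N 1, fun n hn => ?_⟩
    set i := ipOf f with hi
    have hn1 : 1 ≤ n := le_trans (le_max_right _ _) hn
    have hinN : N ≤ i n := le_trans (le_max_left N 1)
      (le_trans hn (le_trans (by omega) (ipOf_ge f n hn1)))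
    have hGf : G (i n) ≤ f (i n) := hN _ hinN
    have hstep : f (i n) < i (n + 1) := ipOf_step_gt f n
    have hGi : G (i n) ≤ i (n + 1) := by omega
    have hin1 : n + 1 ≤ i n := ipOf_ge f n hn1
    set k0 := Nat.find (hex (i n)) with hk0
    have hk0spec : i n ≤ j k0 := Nat.find_spec (hex (i n))
    rcases le_or_gt k0 (n + 1) with hle | hlt
    · -- use k = n + 1
      refine ⟨n + 1, by omega, Set.Ico_subset_Ico ?_ ?_⟩
      · exact le_trans hk0spec (hjmono.monotone hle)
      · have h1 : j (n + 1 + 1) ≤ j (i n + 1) := hjmono.monotone (by omega)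
        have h2 : j (i n + 1) ≤ G (i n) := le_max_right _ _
        omega
    · -- use k = k0
      refine ⟨k0, by omega, Set.Ico_subset_Ico hk0spec ?_⟩
      have h2 : j (k0 + 1) ≤ G (i n) := le_max_left _ _
      omega
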